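/- Let f : S → E be a strictly increasing function from a set S of epsilon numbers into the epsilon numbers. Then the assignment x ↦ x[f], defined on A = {x : Ep(x) ⊆ S}, is injective. -/

import Mathlib

open Ordinal

/-- An ordinal is an epsilon number if it is a fixed point of `ω ^ ·`. -/
def IsEpsilon (x : Ordinal.{0}) : Prop := ω ^ x = x

theorem cnf_fst_lt {x : Ordinal.{0}} (h : ¬ ω ^ x = x) {p : Ordinal × Ordinal}
    (hp : p ∈ CNF ω x) : p.1 < x := by
  have hx : x ≠ 0 := by
    rintro rfl
    simp [Ordinal.CNF.zero_right] at hp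
  have h1 : p.1 ≤ Ordinal.log ω x := Ordinal.CNF.fst_le_log hp
  have h2 : Ordinal.log ω x < x := by
    rcases lt_or_eq_of_le (Ordinal.log_le_self ω x) with h' | h'
    · exact h'
    · exfalso
      have hle := Ordinal.opow_log_le_self ω hx
      rw [h'] at hle
      exact h (le_antisymm hle (Ordinal.right_le_opow x one_lt_omega0))
  exact lt_of_le_of_lt h1 h2

open scoped Classical in
/-- The set of epsilon numbers occurring hereditarily in the Cantor normal form of `x`. -/
noncomputable def Ep (x : Ordinal.{0}) : Set Ordinal.{0} :=
  if h : ω ^ x = x then {x}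
  else ⋃ p : {q // q ∈ CNF ω x}, Ep p.1.1
termination_by x
decreasing_by exact cnf_fst_lt h p.2

open scoped Classical in
/-- Simultaneous substitution of the epsilon numbers occurring hereditarily in the
Cantor normal form of `x` by their values under `f`. -/
noncomputable def subst (f : Ordinal.{0} → Ordinal.{0}) (x : Ordinal.{0}) : Ordinal.{0} :=
  if h : ω ^ x = x then f x
  else (((CNF ω x).attach).map (fun p => ω ^ subst f p.1.1 * p.1.2)).sum
termination_by x
decreasing_by exact cnf_fst_lt h p.2

private lemma eps_ne_zero {x : Ordinal.{0}} (h : ω ^ x = x) : x ≠ 0 := by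
  rintro rfl; simp at h

private lemma eps_pos {x : Ordinal.{0}} (h : ω ^ x = x) : 0 < x :=
  pos_iff_ne_zero.2 (eps_ne_zero h)

private lemma eps_log {x : Ordinal.{0}} (h : ω ^ x = x) : log ω x = x := by
  conv_lhs => rw [← h]
  exact log_opow one_lt_omega0 x

private lemma log_lt {x : Ordinal.{0}} (h : ¬ ω ^ x = x) (hx : x ≠ 0) : log ω x < x := by
  rcases lt_or_eq_of_le (Ordinal.log_le_self ω x) with h' | h'
  · exact h'
  · exfalso
    have hle := Ordinal.opow_log_le_self ω hx
    rw [h'] at hle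
    exact h (le_antisymm hle (Ordinal.right_le_opow x one_lt_omega0))

private lemma CNF_eps {x : Ordinal.{0}} (h : ω ^ x = x) : CNF ω x = [(x, 1)] := by
  rw [Ordinal.CNF.ne_zero (eps_ne_zero h), eps_log h, h,
    Ordinal.div_self (eps_ne_zero h), Ordinal.mod_self, Ordinal.CNF.zero_right]

private lemma mem_Ep_self {x : Ordinal.{0}} (h : ω ^ x = x) : x ∈ Ep x := by
  rw [Ep, dif_pos h]; rfl

private lemma Ep_ne {x : Ordinal.{0}} (h : ¬ ω ^ x = x) :
    Ep x = ⋃ p : {q // q ∈ CNF ω x}, Ep p.1.1 := by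
  conv_lhs => rw [Ep]
  exact dif_neg h

private lemma Ep_cnf {x : Ordinal.{0}} {p : Ordinal × Ordinal} (hp : p ∈ CNF ω x) :
    Ep p.1 ⊆ Ep x := by
  by_cases h : ω ^ x = x
  · rw [CNF_eps h, List.mem_singleton] at hp
    subst hp
    exact subset_rfl
  · rw [Ep_ne h]
    exact Set.subset_iUnion (fun q : {q // q ∈ CNF ω x} => Ep q.1.1) ⟨p, hp⟩

private lemma Ep_of_cnf_subset {r x : Ordinal.{0}}
    (hsub : ∀ p ∈ CNF ω r, p ∈ CNF ω x) : Ep r ⊆ Ep x := by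
  by_cases hr : ω ^ r = r
  · have : ((r, 1) : Ordinal × Ordinal) ∈ CNF ω x := by
      apply hsub; rw [CNF_eps hr]; exact List.mem_singleton_self _
    exact Ep_cnf this
  · rw [Ep, dif_neg hr]
    apply Set.iUnion_subset
    rintro ⟨p, hp⟩
    exact Ep_cnf (hsub p hp)

private lemma Ep_log_subset {x : Ordinal.{0}} (hx : x ≠ 0) : Ep (log ω x) ⊆ Ep x := by
  by_cases h : ω ^ x = x
  · rw [eps_log h]
  · exact Ep_cnf (p := (log ω x, x / ω ^ log ω x))
      (by rw [Ordinal.CNF.ne_zero hx]; exact List.mem_cons_self)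

private lemma Ep_zero : Ep 0 = ∅ := by
  rw [Ep, dif_neg (by simp)]
  simp [Ordinal.CNF.zero_right]

private lemma Ep_mod_subset {x : Ordinal.{0}} (hx : x ≠ 0) :
    Ep (x % ω ^ log ω x) ⊆ Ep x := by
  by_cases h : ω ^ x = x
  · rw [eps_log h, h, Ordinal.mod_self, Ep_zero]
    exact Set.empty_subset _
  · apply Ep_of_cnf_subset
    intro p hp
    rw [Ordinal.CNF.ne_zero hx]
    exact List.mem_cons_of_mem _ hp

private lemma subst_eps {f : Ordinal.{0} → Ordinal.{0}} {x : Ordinal.{0}} (h : ω ^ x = x) :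
    subst f x = f x := by
  rw [subst, dif_pos h]

private lemma subst_sum {f : Ordinal.{0} → Ordinal.{0}} {x : Ordinal.{0}} (h : ¬ ω ^ x = x) :
    subst f x = ((CNF ω x).map fun p => ω ^ subst f p.1 * p.2).sum := by
  rw [subst, dif_neg h]
  exact congrArg List.sum (List.attach_map_val (l := CNF ω x) (f := fun p => ω ^ subst f p.1 * p.2))

private lemma subst_zero (f : Ordinal.{0} → Ordinal.{0}) : subst f 0 = 0 := by
  rw [subst_sum (by simp), Ordinal.CNF.zero_right]
  rfl

section Main

variable {S : Set Ordinal.{0}} {f : Ordinal.{0} → Ordinal.{0}}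
  (hfE : ∀ e ∈ S, IsEpsilon (f e))

include hfE

private lemma subst_rec {x : Ordinal.{0}} (hx : x ≠ 0) (h : ¬ ω ^ x = x) (hE : Ep x ⊆ S) :
    subst f x = ω ^ subst f (log ω x) * (x / ω ^ log ω x) + subst f (x % ω ^ log ω x) := by
  rw [subst_sum h, Ordinal.CNF.ne_zero hx, List.map_cons, List.sum_cons]
  congr 1
  by_cases hr0 : x % ω ^ log ω x = 0
  · rw [hr0, subst_zero, Ordinal.CNF.zero_right]
    rfl
  by_cases hre : ω ^ (x % ω ^ log ω x) = x % ω ^ log ω x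
  · rw [CNF_eps hre]
    have hrS : x % ω ^ log ω x ∈ S := hE (Ep_mod_subset hx (mem_Ep_self hre))
    have hfr : ω ^ f (x % ω ^ log ω x) = f (x % ω ^ log ω x) := hfE _ hrS
    simp [subst_eps hre, hfr]
  · rw [subst_sum hre]

private lemma subst_pos {x : Ordinal.{0}} (hx : x ≠ 0) (hE : Ep x ⊆ S) : 0 < subst f x := by
  by_cases h : ω ^ x = x
  · rw [subst_eps h]
    exact eps_pos (hfE x (hE (mem_Ep_self h)))
  · rw [subst_rec hfE hx h hE]
    refine lt_of_lt_of_le ?_ (le_self_add)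
    exact mul_pos (opow_pos _ omega0_pos) (Ordinal.div_opow_log_pos _ hx)

variable (hf : StrictMonoOn f S)
include hf

private lemma key : ∀ y : Ordinal.{0},
    (∀ x, x < y → Ep x ⊆ S → Ep y ⊆ S → subst f x < subst f y) ∧
    (y ≠ 0 → Ep y ⊆ S → subst f y < ω ^ (subst f (log ω y) + 1)) := by
  intro y
  induction y using Ordinal.induction with
  | _ y IH =>
  constructor
  · -- strict monotonicity
    intro x
    induction x using Ordinal.induction with
    | _ x IHx =>
    intro hxy hEx hEy
    have hy0 : y ≠ 0 := pos_iff_ne_zero.1 (lt_of_le_of_lt (zero_le (a := x)) hxy)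
    by_cases hy : ω ^ y = y
    · -- y is an epsilon number
      have hyS : y ∈ S := hEy (mem_Ep_self hy)
      rw [subst_eps hy]
      by_cases hx : ω ^ x = x
      · rw [subst_eps hx]
        exact hf (hEx (mem_Ep_self hx)) hyS hxy
      by_cases hx0 : x = 0
      · rw [hx0, subst_zero]
        exact eps_pos (hfE y hyS)
      · have hb := (IH x hxy).2 hx0 hEx
        have hlx : log ω x < x := log_lt hx hx0
        have hm : subst f (log ω x) < f y := by
          rw [← subst_eps (f := f) hy]
          exact IHx _ hlx (hlx.trans hxy) (fun z hz => hEx (Ep_log_subset hx0 hz)) hEy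
        calc subst f x < ω ^ (subst f (log ω x) + 1) := hb
          _ ≤ ω ^ f y := opow_le_opow_right omega0_pos (Order.add_one_le_of_lt hm)
          _ = f y := hfE y hyS
    · -- y is not an epsilon number
      have heyy : log ω y < y := log_lt hy hy0
      have hEey : Ep (log ω y) ⊆ S := fun z hz => hEy (Ep_log_subset hy0 hz)
      have hEry : Ep (y % ω ^ log ω y) ⊆ S := fun z hz => hEy (Ep_mod_subset hy0 hz)
      have hrec_y := subst_rec hfE hy0 hy hEy
      have hcy1 : 1 ≤ y / ω ^ log ω y :=
        Order.one_le_iff_pos.2 (Ordinal.div_opow_log_pos _ hy0)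
      have hbase : ω ^ subst f (log ω y) ≤ subst f y := by
        rw [hrec_y]
        calc ω ^ subst f (log ω y) = ω ^ subst f (log ω y) * 1 := (mul_one _).symm
          _ ≤ ω ^ subst f (log ω y) * (y / ω ^ log ω y) := mul_le_mul_right hcy1 _
          _ ≤ _ := le_self_add
      by_cases hx0 : x = 0
      · rw [hx0, subst_zero]
        exact subst_pos hfE hy0 hEy
      by_cases hx : ω ^ x = x
      · -- x is an epsilon number
        have hxS : x ∈ S := hEx (mem_Ep_self hx)
        have hxle : x ≤ log ω y := by
          apply (opow_le_iff_le_log one_lt_omega0 hy0).1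
          rw [hx]; exact hxy.le
        rcases lt_or_eq_of_le hxle with hlt | heq
        · have h1 : subst f x < subst f (log ω y) := (IH _ heyy).1 x hlt hEx hEey
          have h2 : ω ^ subst f x < ω ^ subst f (log ω y) :=
            (opow_lt_opow_iff_right one_lt_omega0).2 h1
          rw [subst_eps hx, hfE x hxS] at h2
          rw [subst_eps hx]
          exact h2.trans_le hbase
        · rw [hrec_y, ← heq, subst_eps hx]
          have hfx : ω ^ f x = f x := hfE x hxS
          rcases lt_or_eq_of_le hcy1 with hcy2 | hcy1'
          · rw [← heq] at hcy2
            calc f x = ω ^ f x * 1 := by rw [hfx, mul_one]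
              _ < ω ^ f x * (y / ω ^ x) :=
                (mul_lt_mul_iff_right₀ (opow_pos _ omega0_pos)).2 hcy2
              _ ≤ _ := le_self_add
          · have hry0 : y % ω ^ x ≠ 0 := by
              intro h0
              have hdm := Ordinal.div_add_mod y (ω ^ log ω y)
              rw [← hcy1', mul_one, ← heq, h0, add_zero, hx] at hdm
              exact absurd hdm (ne_of_lt hxy)
            have hpos : 0 < subst f (y % ω ^ x) := by
              apply subst_pos hfE hry0
              intro z hz
              apply hEry
              rw [← heq]
              exact hz
            have hcy'' : y / ω ^ x = 1 := by rw [heq, ← hcy1']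
            calc f x = ω ^ f x * (y / ω ^ x) + 0 := by
                  rw [hcy'', mul_one, add_zero, hfx]
              _ < ω ^ f x * (y / ω ^ x) + subst f (y % ω ^ x) := add_lt_add_right hpos _
      · -- x is not an epsilon number
        have hexy : log ω x ≤ log ω y := log_mono_right ω hxy.le
        have hEex : Ep (log ω x) ⊆ S := fun z hz => hEx (Ep_log_subset hx0 hz)
        have hErx : Ep (x % ω ^ log ω x) ⊆ S := fun z hz => hEx (Ep_mod_subset hx0 hz)
        have hrec_x := subst_rec hfE hx0 hx hEx
        rcases lt_or_eq_of_le hexy with hlt | heq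
        · have h1 : subst f (log ω x) < subst f (log ω y) := (IH _ heyy).1 _ hlt hEex hEey
          have h2 := (IH x hxy).2 hx0 hEx
          calc subst f x < ω ^ (subst f (log ω x) + 1) := h2
            _ ≤ ω ^ subst f (log ω y) :=
              opow_le_opow_right omega0_pos (Order.add_one_le_of_lt h1)
            _ ≤ subst f y := hbase
        · have hcxy : x / ω ^ log ω y ≤ y / ω ^ log ω y := by
            rw [← heq]; exact Ordinal.div_le_left hxy.le _
          rw [heq] at hrec_x hErx
          rw [hrec_x, hrec_y]
          rcases lt_or_eq_of_le hcxy with hclt | hceq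
          · have hrx_lt : subst f (x % ω ^ log ω y) < ω ^ subst f (log ω y) := by
              by_cases h0 : x % ω ^ log ω y = 0
              · rw [h0, subst_zero]
                exact opow_pos _ omega0_pos
              · have hrlt : x % ω ^ log ω y < x := by
                  rw [← heq]; exact Ordinal.mod_opow_log_lt_self ω hx0
                have hb := (IH _ (hrlt.trans hxy)).2 h0 hErx
                have hll : log ω (x % ω ^ log ω y) < log ω y := by
                  apply (opow_lt_opow_iff_right one_lt_omega0).1
                  apply lt_of_le_of_lt (Ordinal.opow_log_le_self ω h0)
                  exact Ordinal.mod_lt _ (Ordinal.opow_ne_zero _ omega0_ne_zero)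
                have hm : subst f (log ω (x % ω ^ log ω y)) < subst f (log ω y) :=
                  (IH _ heyy).1 _ hll
                    (fun z hz => hErx (Ep_log_subset h0 hz)) hEey
                calc subst f (x % ω ^ log ω y)
                    < ω ^ (subst f (log ω (x % ω ^ log ω y)) + 1) := hb
                  _ ≤ ω ^ subst f (log ω y) :=
                    opow_le_opow_right omega0_pos (Order.add_one_le_of_lt hm)
            calc ω ^ subst f (log ω y) * (x / ω ^ log ω y) + subst f (x % ω ^ log ω y)
                < ω ^ subst f (log ω y) * (x / ω ^ log ω y) + ω ^ subst f (log ω y) :=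
                  add_lt_add_right hrx_lt _
              _ = ω ^ subst f (log ω y) * (x / ω ^ log ω y + 1) := (mul_add_one _ _).symm
              _ ≤ ω ^ subst f (log ω y) * (y / ω ^ log ω y) :=
                  mul_le_mul_right (Order.add_one_le_of_lt hclt) _
              _ ≤ _ := le_self_add
          · rw [hceq]
            apply add_lt_add_right
            have hrxy : x % ω ^ log ω y < y % ω ^ log ω y := by
              have hdx := Ordinal.div_add_mod x (ω ^ log ω y)
              have hdy := Ordinal.div_add_mod y (ω ^ log ω y)
              rw [hceq] at hdx
              have h' : ω ^ log ω y * (y / ω ^ log ω y) + x % ω ^ log ω y <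
                  ω ^ log ω y * (y / ω ^ log ω y) + y % ω ^ log ω y := by
                rw [hdx, hdy]; exact hxy
              exact (add_lt_add_iff_left _).1 h'
            have hry_lt : y % ω ^ log ω y < y := Ordinal.mod_opow_log_lt_self ω hy0
            exact (IH _ hry_lt).1 _ hrxy hErx hEry
  · -- bound
    intro hy0 hEy
    by_cases hy : ω ^ y = y
    · rw [eps_log hy, subst_eps hy]
      have hfy := hfE y (hEy (mem_Ep_self hy))
      conv_lhs => rw [← hfy]
      exact (opow_lt_opow_iff_right one_lt_omega0).2 (lt_add_of_pos_right _ zero_lt_one)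
    · have hrec_y := subst_rec hfE hy0 hy hEy
      have hcy : y / ω ^ log ω y < ω := Ordinal.div_opow_log_lt y one_lt_omega0
      have hEey : Ep (log ω y) ⊆ S := fun z hz => hEy (Ep_log_subset hy0 hz)
      have hEry : Ep (y % ω ^ log ω y) ⊆ S := fun z hz => hEy (Ep_mod_subset hy0 hz)
      have hr_lt : subst f (y % ω ^ log ω y) < ω ^ subst f (log ω y) := by
        by_cases h0 : y % ω ^ log ω y = 0
        · rw [h0, subst_zero]
          exact opow_pos _ omega0_pos
        · have hrlt : y % ω ^ log ω y < y := Ordinal.mod_opow_log_lt_self ω hy0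
          have hb := (IH _ hrlt).2 h0 hEry
          have hll : log ω (y % ω ^ log ω y) < log ω y := by
            apply (opow_lt_opow_iff_right one_lt_omega0).1
            apply lt_of_le_of_lt (Ordinal.opow_log_le_self ω h0)
            exact Ordinal.mod_lt _ (Ordinal.opow_ne_zero _ omega0_ne_zero)
          have hm : subst f (log ω (y % ω ^ log ω y)) < subst f (log ω y) :=
            (IH _ (log_lt hy hy0)).1 _ hll
              (fun z hz => hEry (Ep_log_subset h0 hz)) hEey
          calc subst f (y % ω ^ log ω y)
              < ω ^ (subst f (log ω (y % ω ^ log ω y)) + 1) := hb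
            _ ≤ ω ^ subst f (log ω y) :=
              opow_le_opow_right omega0_pos (Order.add_one_le_of_lt hm)
      calc subst f y
          = ω ^ subst f (log ω y) * (y / ω ^ log ω y) + subst f (y % ω ^ log ω y) := hrec_y
        _ < ω ^ subst f (log ω y) * (y / ω ^ log ω y) + ω ^ subst f (log ω y) :=
            add_lt_add_right hr_lt _
        _ = ω ^ subst f (log ω y) * (y / ω ^ log ω y + 1) := (mul_add_one _ _).symm
        _ ≤ ω ^ subst f (log ω y) * ω :=
            mul_le_mul_right (Order.add_one_le_of_lt hcy) _
        _ = ω ^ (subst f (log ω y) + 1) := by rw [opow_add, opow_one]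

end Main

theorem stmt18 (S : Set Ordinal.{0}) (f : Ordinal → Ordinal)
    (hS : ∀ e ∈ S, IsEpsilon e) (hfE : ∀ e ∈ S, IsEpsilon (f e))
    (hf : StrictMonoOn f S) :
    Set.InjOn (subst f) {x : Ordinal | Ep x ⊆ S} := by
  intro a ha b hb hab
  by_contra hne
  rcases lt_or_gt_of_ne hne with h | h
  · exact absurd hab (ne_of_lt ((key hfE hf b).1 a h ha hb))
  · exact absurd hab.symm (ne_of_lt ((key hfE hf a).1 b h hb ha))
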